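/- In a proper unital *-ring A with A_Σ salient: if a ∈ 𝔠 (i.e. a^*a ⪯ na for some n) and b ∈ A satisfy b^*ab = 0, then ab = 0. -/

import Mathlib

open Pointwise

/-- Finite sums of elements of the form `star a * a`. -/
def sSums (A : Type*) [Ring A] [StarRing A] : Set A :=
  (AddSubmonoid.closure {x : A | ∃ a : A, x = star a * a} : Set A)

/-- The *-positive elements. -/
def pos (A : Type*) [Ring A] [StarRing A] : Set A :=
  {a : A | ∃ n : ℕ, 0 < n ∧ n • a ∈ sSums A}

/-- The *-accretive elements. -/
def accr (A : Type*) [Ring A] [StarRing A] : Set A :=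
  {a : A | a + star a ∈ pos A}

/-- The order `a ⪯ b ⟺ b - a ∈ 𝔯`. -/
def ple {A : Type*} [Ring A] [StarRing A] (a b : A) : Prop := b - a ∈ accr A

/-- The cone `𝔠`. -/
def cone (A : Type*) [Ring A] [StarRing A] : Set A :=
  {a : A | ∃ n : ℕ, 0 < n ∧ ple (star a * a) (n • a)}

/-- The ball `𝔅`. -/
def ball (A : Type*) [Ring A] [StarRing A] : Set A :=
  {a : A | ple (star a * a) 1}

lemma conj_mem' {A : Type*} [Ring A] [StarRing A] (b : A) {x : A} (hx : x ∈ sSums A) :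
    star b * x * b ∈ sSums A := by
  induction hx using AddSubmonoid.closure_induction with
  | mem y hy =>
    obtain ⟨c, rfl⟩ := hy
    apply AddSubmonoid.subset_closure
    exact ⟨c * b, by simp [mul_assoc]⟩
  | zero => simpa using (show (0 : A) ∈ sSums A from (AddSubmonoid.closure {x : A | ∃ a : A, x = star a * a}).zero_mem)
  | add y z _ _ hy hz =>
    have : star b * (y + z) * b = star b * y * b + star b * z * b := by noncomm_ring
    rw [this]; exact add_mem hy hz

theorem stmt8 {A : Type*} [Ring A] [StarRing A]
    (proper : ∀ a : A, star a * a = 0 → a = 0)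
    (salient : sSums A ∩ (-sSums A) = {0})
    (a b : A) (ha : a ∈ cone A) (h : star b * a * b = 0) :
    a * b = 0 := by
  obtain ⟨n, hn, hple⟩ := ha
  obtain ⟨m, hm, hq⟩ := hple
  set q : A := (n • a - star a * a) + star (n • a - star a * a) with hqdef
  -- star version of h
  have h' : star b * star a * b = 0 := by
    have := congrArg star h
    simpa [star_mul, mul_assoc] using this
  set x : A := star (a * b) * (a * b) with hxdef
  have hxmem : x ∈ sSums A := AddSubmonoid.subset_closure ⟨a * b, rfl⟩
  -- conjugate m • q by b
  have hconj : star b * (m • q) * b ∈ sSums A := conj_mem' b hq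
  have key : star b * (m • q) * b = -((2 * m) • x) := by
    have hw : star b * (star a * a) * b = x := by rw [hxdef]; simp [star_mul, mul_assoc]
    have e0 : star b * q * b
        = n • (star b * a * b) + n • (star b * star a * b)
          - (star b * (star a * a) * b + star b * (star a * a) * b) := by
      simp only [hqdef, star_add, star_sub, star_smul, star_trivial, star_mul, star_star,
        mul_add, add_mul, mul_sub, sub_mul, mul_smul_comm, smul_mul_assoc]
      abel
    have e1 : star b * (m • q) * b = m • (star b * q * b) := by
      rw [mul_smul_comm, smul_mul_assoc]
    rw [e1, e0, h, h', hw]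
    simp [two_mul, add_smul, smul_add, smul_neg]
  rw [key] at hconj
  have h2x : (2 * m) • x = 0 := by
    have : (2 * m) • x ∈ sSums A ∩ (-sSums A) := ⟨AddSubmonoid.nsmul_mem _ hxmem _,
      Set.mem_neg.mpr (by simpa using hconj)⟩
    rw [salient] at this
    simpa using this
  have hx0 : x = 0 := by
    have hneg : -x ∈ sSums A := by
      have : -x = (2 * m - 1) • x := by
        have h1 : (2 * m - 1) • x + x = (2 * m) • x := by
          rw [← succ_nsmul]
          congr 1
          omega
        have h3 : (2 * m - 1) • x + x = 0 := h1.trans h2x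
        exact (eq_neg_of_add_eq_zero_left h3).symm
      rw [this]
      exact AddSubmonoid.nsmul_mem _ hxmem _
    have : x ∈ sSums A ∩ (-sSums A) := ⟨hxmem, Set.mem_neg.mpr (by simpa using hneg)⟩
    rw [salient] at this
    simpa using this
  exact proper _ hx0
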